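/- Let E ∈ ℤ_max^{n×n} be irreducible, meaning that for all indices i, j there exists k ≥ 1 with (E^k)_{ij} ≠ −∞ (the precedence graph of E is strongly connected), and let K = {x ∈ ℤ_max^n : Ex ≤ x} (entrywise, where Ex is the max-plus matrix–vector product). Then K has finite volume. Moreover, if the max-plus spectral radius of E is strictly positive — equivalently, if there exist i and 1 ≤ k ≤ n with (E^k)_{ii} > 0 — then K = {(−∞,…,−∞)}. -/

import Mathlib

/-- The max-plus matrix–vector product over `ℤ_max = (ℤ ∪ {−∞}, max, +)`:
`(Ax)_i = max_j (A_{ij} + x_j)`. -/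
def maxMulVec {m k : ℕ} (A : Matrix (Fin m) (Fin k) (WithBot ℤ))
    (x : Fin k → WithBot ℤ) : Fin m → WithBot ℤ :=
  fun i => Finset.univ.sup fun j => A i j + x j

/-- The max-plus matrix product: `(AB)_{ij} = max_t (A_{it} + B_{tj})`. -/
def maxMatMul {m k l : ℕ} (A : Matrix (Fin m) (Fin k) (WithBot ℤ))
    (B : Matrix (Fin k) (Fin l) (WithBot ℤ)) : Matrix (Fin m) (Fin l) (WithBot ℤ) :=
  Matrix.of fun i j => Finset.univ.sup fun t => A i t + B t j

/-- `Im A`: the subsemimodule generated by the columns of `A`, i.e. the set of all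
max-plus linear combinations `Ay` of the columns of `A`. -/
def ImM {m k : ℕ} (A : Matrix (Fin m) (Fin k) (WithBot ℤ)) : Set (Fin m → WithBot ℤ) :=
  {v | ∃ y : Fin k → WithBot ℤ, v = maxMulVec A y}

/-- A subsemimodule of `ℤ_max^m`: contains `(−∞,…,−∞)`, is closed under entrywise max,
and under addition of a scalar `λ ∈ ℤ ∪ {−∞}` to all entries. -/
def IsSubsemimodule {m : ℕ} (X : Set (Fin m → WithBot ℤ)) : Prop :=
  (fun _ => ⊥) ∈ X ∧ (∀ x ∈ X, ∀ y ∈ X, x ⊔ y ∈ X) ∧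
    ∀ (c : WithBot ℤ), ∀ x ∈ X, (fun i => c + x i) ∈ X

/-- The volume of a subset of `ℤ_max^m`: the cardinality (in `ℕ ∪ {∞}`) of the set
of its elements `x` with `max_i x_i = 0`. -/
noncomputable def vol {m : ℕ} (X : Set (Fin m → WithBot ℤ)) : ℕ∞ :=
  {x ∈ X | Finset.univ.sup x = (0 : WithBot ℤ)}.encard

/-- The max-plus identity matrix: `0` on the diagonal and `−∞` elsewhere. -/
def idMax (m : ℕ) : Matrix (Fin m) (Fin m) (WithBot ℤ) :=
  Matrix.of fun i j => if i = j then (0 : WithBot ℤ) else ⊥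

/-- Max-plus matrix powers: `E⁰ = I`, `E^{k+1} = E^k · E`. -/
def maxMatPow {m : ℕ} (E : Matrix (Fin m) (Fin m) (WithBot ℤ)) :
    ℕ → Matrix (Fin m) (Fin m) (WithBot ℤ)
  | 0 => idMax m
  | k + 1 => maxMatMul (maxMatPow E k) E

lemma myadd_sup (a b c : WithBot ℤ) : a + (b ⊔ c) = (a + b) ⊔ (a + c) :=
  (monotone_id.const_add a).map_max

lemma add_finsup {ι : Type} (s : Finset ι) (a : WithBot ℤ) (f : ι → WithBot ℤ) :
    a + s.sup f = s.sup (fun j => a + f j) := by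
  induction s using Finset.cons_induction with
  | empty => simp
  | cons j s h ih => simp [Finset.sup_cons, ← ih, myadd_sup]

lemma finsup_add {ι : Type} (s : Finset ι) (a : WithBot ℤ) (f : ι → WithBot ℤ) :
    s.sup f + a = s.sup (fun j => f j + a) := by
  rw [add_comm, add_finsup]; simp [add_comm]

lemma maxMulVec_assoc {m k l : ℕ} (A : Matrix (Fin m) (Fin k) (WithBot ℤ))
    (B : Matrix (Fin k) (Fin l) (WithBot ℤ)) (x : Fin l → WithBot ℤ) :
    maxMulVec (maxMatMul A B) x = maxMulVec A (maxMulVec B x) := by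
  funext i
  unfold maxMulVec maxMatMul
  simp only [Matrix.of_apply, finsup_add, add_finsup]
  rw [Finset.sup_comm]
  simp [add_assoc]

lemma maxMulVec_id {m : ℕ} (y : Fin m → WithBot ℤ) : maxMulVec (idMax m) y = y := by
  funext i
  unfold maxMulVec idMax
  apply le_antisymm
  · apply Finset.sup_le
    intro j _
    simp only [Matrix.of_apply]
    rcases eq_or_ne i j with rfl | h
    · simp
    · simp [h]
  · have := Finset.le_sup (f := fun j => (Matrix.of fun i j =>
      if i = j then (0 : WithBot ℤ) else ⊥) i j + y j) (Finset.mem_univ i)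
    simpa using this

lemma maxMulVec_mono {m k : ℕ} (A : Matrix (Fin m) (Fin k) (WithBot ℤ))
    {x y : Fin k → WithBot ℤ} (h : ∀ j, x j ≤ y j) (i : Fin m) :
    maxMulVec A x i ≤ maxMulVec A y i := by
  apply Finset.sup_mono_fun
  intro j _
  exact add_le_add le_rfl (h j)

lemma pow_le {n : ℕ} (E : Matrix (Fin n) (Fin n) (WithBot ℤ))
    (x : Fin n → WithBot ℤ) (hx : ∀ i, maxMulVec E x i ≤ x i) :
    ∀ k, 1 ≤ k → ∀ i, maxMulVec (maxMatPow E k) x i ≤ x i := by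
  intro k
  induction k with
  | zero => omega
  | succ k ih =>
    intro _ i
    show maxMulVec (maxMatMul (maxMatPow E k) E) x i ≤ x i
    rw [maxMulVec_assoc]
    rcases Nat.eq_zero_or_pos k with rfl | hk
    · show maxMulVec (idMax n) (maxMulVec E x) i ≤ x i
      rw [maxMulVec_id]; exact hx i
    · exact le_trans (maxMulVec_mono _ hx i) (ih hk i)

lemma entry_le {n : ℕ} (E : Matrix (Fin n) (Fin n) (WithBot ℤ))
    (x : Fin n → WithBot ℤ) (hx : ∀ i, maxMulVec E x i ≤ x i)
    {k : ℕ} (hk : 1 ≤ k) (i j : Fin n) :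
    maxMatPow E k i j + x j ≤ x i :=
  le_trans (Finset.le_sup (f := fun j => maxMatPow E k i j + x j) (Finset.mem_univ j))
    (pow_le E x hx k hk i)

lemma finite_interval (a : WithBot ℤ) (ha : a ≠ ⊥) :
    {y : WithBot ℤ | a ≤ y ∧ y ≤ 0}.Finite := by
  lift a to ℤ using ha
  apply Set.Finite.subset ((Set.finite_Icc a 0).image (fun z : ℤ => (z : WithBot ℤ)))
  rintro y ⟨h1, h2⟩
  lift y to ℤ using (by rintro rfl; exact absurd h1 (by simp))
  exact ⟨y, ⟨by exact_mod_cast h1, by exact_mod_cast h2⟩, rfl⟩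

/-- Let `E ∈ ℤ_max^{n×n}` be irreducible (for all `i, j` there is `k ≥ 1` with
`(E^k)_{ij} ≠ −∞`), and let `K = {x ∈ ℤ_max^n : Ex ≤ x}` (entrywise). Then `K`
has finite volume; moreover, if the max-plus spectral radius of `E` is strictly
positive, i.e. `(E^k)_{ii} > 0` for some `i` and some `1 ≤ k ≤ n`, then
`K = {(−∞,…,−∞)}`. -/
theorem subfixed_points_finite_volume {n : ℕ} (E : Matrix (Fin n) (Fin n) (WithBot ℤ))
    (hirr : ∀ i j : Fin n, ∃ k : ℕ, 1 ≤ k ∧ maxMatPow E k i j ≠ ⊥) :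
    vol {x : Fin n → WithBot ℤ | ∀ i, maxMulVec E x i ≤ x i} ≠ ⊤ ∧
    ((∃ (i : Fin n) (k : ℕ), 1 ≤ k ∧ k ≤ n ∧ (0 : WithBot ℤ) < maxMatPow E k i i) →
      {x : Fin n → WithBot ℤ | ∀ i, maxMulVec E x i ≤ x i} =
        {fun _ => (⊥ : WithBot ℤ)}) := by
  choose kk hkk1 hkk2 using hirr
  constructor
  · rw [vol, Set.encard_ne_top_iff]
    set t : Fin n → Set (WithBot ℤ) :=
      fun j => ⋃ i, {y : WithBot ℤ | maxMatPow E (kk j i) j i ≤ y ∧ y ≤ 0} with ht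
    have htfin : ∀ j, (t j).Finite := fun j =>
      Set.finite_iUnion fun i => finite_interval _ (hkk2 j i)
    have hpi : (Set.univ.pi t).Finite := Set.Finite.pi (fun j => htfin j)
    apply Set.Finite.subset hpi
    rintro x ⟨hx, hsup⟩
    -- find i0 with x i0 = 0
    obtain ⟨i0, -, hi0⟩ := Finset.exists_mem_eq_sup (Finset.univ : Finset (Fin n))
      (by
        rcases (Finset.univ : Finset (Fin n)).eq_empty_or_nonempty with h | h
        · rw [h] at hsup; simp at hsup
        · exact h) x
    rw [hsup] at hi0
    intro j _
    refine Set.mem_iUnion.mpr ⟨i0, ?_, ?_⟩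
    · have := entry_le E x hx (hkk1 j i0) j i0
      rw [← hi0, add_zero] at this
      exact this
    · rw [← hsup]
      exact Finset.le_sup (Finset.mem_univ j)
  · rintro ⟨i, k, hk1, -, hpos⟩
    ext x
    simp only [Set.mem_setOf_eq, Set.mem_singleton_iff]
    constructor
    · intro hx
      have hxi : x i = ⊥ := by
        by_contra h
        obtain ⟨b, hb⟩ := WithBot.ne_bot_iff_exists.mp h
        obtain ⟨c, hc⟩ := WithBot.ne_bot_iff_exists.mp (ne_bot_of_gt hpos)
        have hle := entry_le E x hx hk1 i i
        rw [← hb, ← hc] at hle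
        rw [← hc] at hpos
        rw [← WithBot.coe_add, WithBot.coe_le_coe] at hle
        have : (0:ℤ) < c := by exact_mod_cast hpos
        omega
      funext j
      have hle := entry_le E x hx (hkk1 i j) i j
      rw [hxi] at hle
      have := le_bot_iff.mp hle
      rcases WithBot.add_eq_bot.mp this with h | h
      · exact absurd h (hkk2 i j)
      · exact h
    · rintro rfl
      intro i
      simp [maxMulVec]
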